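/- Let (S_i)_{i≥1} be rationals with S_i ≠ 0 for all i, and define a_n by a_0 = 1 and n·a_n = Σ_{i=1}^{n} S_i a_{n−i}. Let B_n be the triangular matrix with entries b_{i,j} = S_{i+1−j}/S_{i−j} for j < i and b_{i,i} = S_1/i. Then a_n = pper(B_n) for all n ≥ 0, where pper is defined by pper(B_0) = 1 and pper(B_n) = Σ_{s=1}^{n} {b_{n,s}}·pper(B_{s−1}) with {b_{n,s}} = Π_{k=s}^{n} b_{n,k}. -/

import Mathlib

/-- The coefficients `a_n` defined by `a_0 = 1` and `n a_n = ∑_{i=1}^n S_i a_{n-i}` coincide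
with the parapermanents `pper(B_n)` of the triangular matrices with entries
`b_{i,j} = S_{i+1-j}/S_{i-j}` for `j < i` and `b_{i,i} = S_1/i`, where `pper` satisfies
`pper(B_0) = 1` and the last-row expansion. -/
theorem coeff_eq_pper (S : ℕ → ℚ) (hS : ∀ i : ℕ, 1 ≤ i → S i ≠ 0) (a : ℕ → ℚ)
    (ha0 : a 0 = 1)
    (harec : ∀ n : ℕ, 1 ≤ n → (n : ℚ) * a n = ∑ i ∈ Finset.Icc 1 n, S i * a (n - i))
    (b : ℕ → ℕ → ℚ)
    (hb : ∀ i j : ℕ, 1 ≤ j → j < i → b i j = S (i + 1 - j) / S (i - j))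
    (hbd : ∀ i : ℕ, 1 ≤ i → b i i = S 1 / (i : ℚ))
    (p : ℕ → ℚ) (hp0 : p 0 = 1)
    (hprec : ∀ n : ℕ, 1 ≤ n →
      p n = ∑ s ∈ Finset.Icc 1 n, (∏ k ∈ Finset.Icc s n, b n k) * p (s - 1)) :
    ∀ n : ℕ, a n = p n := by
  intro n
  induction n using Nat.strong_induction_on with
  | _ n ih =>
    match n, ih with
    | 0, _ => simp [ha0, hp0]
    | (m+1), ih =>
      set n := m + 1 with hn
      have hn1 : 1 ≤ n := Nat.le_add_left 1 m
      have hncast : (n : ℚ) ≠ 0 := by positivity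
      -- telescoping product over the off-diagonal part of the last row
      have tele : ∀ d s : ℕ, 1 ≤ s → s + d = n →
          ∏ k ∈ Finset.Icc s (n - 1), b n k = S (d + 1) / S 1 := by
        intro d
        induction d with
        | zero =>
          intro s hs h
          have : Finset.Icc s (n - 1) = ∅ := Finset.Icc_eq_empty (by omega)
          rw [this, Finset.prod_empty, div_self (hS 1 le_rfl)]
        | succ d ihd =>
          intro s hs h
          have hins : Finset.Icc s (n - 1) = insert s (Finset.Icc (s + 1) (n - 1)) := by
            ext x; simp only [Finset.mem_Icc, Finset.mem_insert]; omega
          rw [hins, Finset.prod_insert (by simp [Finset.mem_Icc])]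
          rw [ihd (s + 1) (by omega) (by omega)]
          rw [hb n s hs (by omega)]
          have h1 : n + 1 - s = d + 2 := by omega
          have h2 : n - s = d + 1 := by omega
          rw [h1, h2, div_mul_div_comm, mul_comm (S (d + 2)) (S (d + 1)),
            mul_div_mul_left _ _ (hS (d + 1) (by omega))]
      have prod_eq : ∀ s : ℕ, 1 ≤ s → s ≤ n →
          ∏ k ∈ Finset.Icc s n, b n k = S (n + 1 - s) / (n : ℚ) := by
        intro s hs hsn
        have hins : Finset.Icc s n = insert n (Finset.Icc s (n - 1)) := by
          ext x; simp only [Finset.mem_Icc, Finset.mem_insert]; omega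
        rw [hins, Finset.prod_insert (by simp only [Finset.mem_Icc, not_and, not_le]; omega)]
        rw [hbd n hn1, tele (n - s) s hs (by omega)]
        have h1 : n + 1 - s = (n - s) + 1 := by omega
        rw [h1, div_mul_div_comm, mul_comm ((n : ℚ)) (S 1),
          mul_div_mul_left _ _ (hS 1 le_rfl)]
      -- the recursion for p
      have hpsum : p n = ∑ s ∈ Finset.Icc 1 n, S (n + 1 - s) / (n : ℚ) * p (s - 1) := by
        rw [hprec n hn1]
        refine Finset.sum_congr rfl fun s hs => ?_
        rw [Finset.mem_Icc] at hs
        rw [prod_eq s hs.1 hs.2]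
      have reindex : ∑ s ∈ Finset.Icc 1 n, S (n + 1 - s) * p (s - 1)
          = ∑ i ∈ Finset.Icc 1 n, S i * p (n - i) := by
        refine Finset.sum_nbij' (fun s => n + 1 - s) (fun i => n + 1 - i)
          (fun x hx => ?_) (fun x hx => ?_) (fun x hx => ?_) (fun x hx => ?_)
          (fun x hx => ?_) <;> simp only [Finset.mem_Icc] at hx ⊢
        · omega
        · omega
        · omega
        · omega
        · rw [show n - (n + 1 - x) = x - 1 from by omega]
      have key : (n : ℚ) * p n = ∑ i ∈ Finset.Icc 1 n, S i * p (n - i) := by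
        rw [hpsum, Finset.mul_sum, ← reindex]
        refine Finset.sum_congr rfl fun s hs => ?_
        field_simp
      have key2 : (n : ℚ) * a n = ∑ i ∈ Finset.Icc 1 n, S i * p (n - i) := by
        rw [harec n hn1]
        refine Finset.sum_congr rfl fun i hi => ?_
        rw [Finset.mem_Icc] at hi
        rw [ih (n - i) (by omega)]
      exact mul_left_cancel₀ hncast (key2.trans key.symm)
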